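/- Fix a segment t ∈ {1,…,σ} of a uniform RIV model with segment probability p_t, a finite candidate set C_t ⊂ (t, t+1), an integer k ≥ 1, and set k_t = ⌊p_t k⌋; assume |C_t| ≥ k_t and let Ŵ_t be the greedy committee for segment t. Then for every c ∈ C_t ∖ Ŵ_t and all integers 1 ≤ ℓ ≤ k and 0 ≤ j ≤ ℓ−1, it holds that π(ℓ, c, j) ≤ ℓ/k − 1/(4k). -/

import Mathlib

open MeasureTheory

/-- The distribution of the pair of endpoints `(X, Y)` of a random voter in the uniform
RIV model with `σ` segments and segment probabilities `p 1, …, p σ`: the mixture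
`∑ t, p t • (U_{[t,t+1]} ⊗ U_{[t,t+1]})` where `U_I` is the uniform measure on `I`. -/
noncomputable def rivMeasure (σ : ℕ) (p : ℕ → ℝ) : Measure (ℝ × ℝ) :=
  ∑ t ∈ Finset.Icc 1 σ,
    ENNReal.ofReal (p t) •
      ((volume.restrict (Set.Icc (t : ℝ) (t + 1))).prod
        (volume.restrict (Set.Icc (t : ℝ) (t + 1))))

/-- The `ξ`-th marked point of segment `t`: `t + (2ξ−1)/(2(k_t+2))`. -/
noncomputable def markedPoint (t kt : ℕ) (ξ : ℕ) : ℝ :=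
  (t : ℝ) + (2 * (ξ : ℝ) - 1) / (2 * ((kt : ℝ) + 2))

/-- `w 2, …, w (kt+1)` is a greedy committee for segment `t` with candidate set `Ct`:
for each `ξ = 2, …, kt+1`, `w ξ` is a candidate not chosen before that is closest to
the marked point `m_ξ` among all not-yet-chosen candidates. -/
def IsGreedyCommittee (t kt : ℕ) (Ct : Finset ℝ) (w : ℕ → ℝ) : Prop :=
  ∀ ξ ∈ Finset.Icc 2 (kt + 1),
    w ξ ∈ Ct ∧ w ξ ∉ (Finset.Icc 2 (ξ - 1)).image w ∧
      ∀ c' ∈ Ct, c' ∉ (Finset.Icc 2 (ξ - 1)).image w →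
        |w ξ - markedPoint t kt ξ| ≤ |c' - markedPoint t kt ξ|

/-- `rank W c = ρ(c)`: the number of points of `W` strictly to the left of `c`. -/
noncomputable def rank (W : Finset ℝ) (c : ℝ) : ℕ :=
  (W.filter (fun x => x < c)).card

/-- `dPlus t kt W c r = d⁺_r(c)`: the distance from `c` to the `(r+1)`-th element of `W`
to the right of `c` (elements of `W` listed in increasing order), or to the right
endpoint `t+1` of the segment if no such element exists. -/
noncomputable def dPlus (t kt : ℕ) (W : Finset ℝ) (c : ℝ) (r : ℕ) : ℝ :=
  if rank W c + r < kt then (W.sort (· ≤ ·)).getD (rank W c + r) 0 - c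
  else ((t : ℝ) + 1) - c

/-- `dMinus t W c r = d⁻_r(c)`: the distance from `c` to the `(r+1)`-th element of `W`
to the left of `c`, or to the left endpoint `t` of the segment if no such element exists. -/
noncomputable def dMinus (t : ℕ) (W : Finset ℝ) (c : ℝ) (r : ℕ) : ℝ :=
  if r + 1 ≤ rank W c then c - (W.sort (· ≤ ·)).getD (rank W c - r - 1) 0
  else c - (t : ℝ)

/-- The event that a voter with endpoint pair `xy` approves `c`, approves at most `r₁`
elements of `W` strictly to the left of `c`, and at most `r₂` elements of `W` strictly
to the right of `c` (the voter's approval interval is `[min xy, max xy]`). -/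
def approvalEvent (W : Finset ℝ) (c : ℝ) (r₁ r₂ : ℕ) : Set (ℝ × ℝ) :=
  {xy | (min xy.1 xy.2 ≤ c ∧ c ≤ max xy.1 xy.2) ∧
    (W.filter (fun x => x < c ∧ min xy.1 xy.2 ≤ x ∧ x ≤ max xy.1 xy.2)).card ≤ r₁ ∧
    (W.filter (fun x => c < x ∧ min xy.1 xy.2 ≤ x ∧ x ≤ max xy.1 xy.2)).card ≤ r₂}

/-- `segmentMiddle t kt Ct = K_t`: the candidates of `C_t` lying in
`(t + 3/(2(k_t+2)), t + 1 − 3/(2(k_t+2)))`. -/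
noncomputable def segmentMiddle (t kt : ℕ) (Ct : Finset ℝ) : Finset ℝ :=
  Ct.filter (fun x =>
    (t : ℝ) + 3 / (2 * ((kt : ℝ) + 2)) < x ∧ x < (t : ℝ) + 1 - 3 / (2 * ((kt : ℝ) + 2)))

section SortAux

private lemma sortL1 (W : Finset ℝ) (i : ℕ) (hi : i < W.card) :
    (W.filter (fun x => x < (W.sort (· ≤ ·)).getD i 0)).card ≤ i := by
  set s := W.sort (· ≤ ·) with hs
  have hlen : s.length = W.card := Finset.length_sort _
  have hil : i < s.length := by omega
  have hv : s.getD i 0 = s.get ⟨i, hil⟩ := List.getD_eq_get _ _ ⟨i, hil⟩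
  have hsub : W.filter (fun x => x < s.getD i 0) ⊆ (s.take i).toFinset := by
    intro x hx
    simp only [Finset.mem_filter] at hx
    obtain ⟨hxW, hxlt⟩ := hx
    have hxs : x ∈ s := (Finset.mem_sort _).2 hxW
    obtain ⟨m, hm⟩ := List.get_of_mem hxs
    by_cases hmi : (m : ℕ) < i
    · rw [List.mem_toFinset]
      have : (s.take i).get ⟨m, by simp [List.length_take]; omega⟩ = x := by
        rw [List.get_eq_getElem, List.getElem_take]
        exact hm
      rw [← this]; exact List.get_mem _ _
    · exfalso
      have hle : s.get ⟨i, hil⟩ ≤ s.get m :=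
        (W.pairwise_sort (· ≤ ·)).rel_get_of_le (by simpa [Fin.le_iff_val_le_val] using Nat.le_of_not_lt hmi)
      rw [hm, ← hv] at hle
      exact absurd hxlt (not_lt.2 hle)
  calc (W.filter (fun x => x < s.getD i 0)).card
      ≤ (s.take i).toFinset.card := Finset.card_le_card hsub
    _ ≤ (s.take i).length := (s.take i).toFinset_card_le
    _ ≤ i := by simp [List.length_take]

private lemma sortL2 (W : Finset ℝ) (i : ℕ) (hi : i < W.card) :
    i + 1 ≤ (W.filter (fun x => x ≤ (W.sort (· ≤ ·)).getD i 0)).card := by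
  set s := W.sort (· ≤ ·) with hs
  have hlen : s.length = W.card := Finset.length_sort _
  have hil : i < s.length := by omega
  have hv : s.getD i 0 = s.get ⟨i, hil⟩ := List.getD_eq_get _ _ ⟨i, hil⟩
  have hsub : (s.take (i+1)).toFinset ⊆ W.filter (fun x => x ≤ s.getD i 0) := by
    intro x hx
    rw [List.mem_toFinset] at hx
    obtain ⟨m, hm⟩ := List.get_of_mem hx
    have hmlt : (m : ℕ) < i + 1 := by
      have := m.2; simp [List.length_take] at this; omega
    have hx' : x = s.get ⟨m, by omega⟩ := by
      rw [← hm]; simp only [List.get_eq_getElem, List.getElem_take]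
    have hxW : x ∈ W := by
      rw [← Finset.mem_sort (· ≤ ·)]
      rw [hx']; exact List.get_mem _ _
    refine Finset.mem_filter.2 ⟨hxW, ?_⟩
    rw [hv, hx']
    exact (W.pairwise_sort (· ≤ ·)).rel_get_of_le (by simpa using Nat.lt_succ_iff.1 hmlt)
  have hnodup : (s.take (i+1)).Nodup := (W.sort_nodup (· ≤ ·)).sublist (List.take_sublist _ _)
  have hcard : (s.take (i+1)).toFinset.card = (s.take (i+1)).length :=
    List.toFinset_card_of_nodup hnodup
  have hlen2 : (s.take (i+1)).length = i + 1 := by simp [List.length_take]; omega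
  calc i + 1 = (s.take (i+1)).toFinset.card := by rw [hcard, hlen2]
    _ ≤ _ := Finset.card_le_card hsub

private lemma sortD1 (W : Finset ℝ) (i : ℕ) (hi : i < W.card) (L : ℝ)
    (h : i + 1 ≤ (W.filter (fun x => x < L)).card) :
    (W.sort (· ≤ ·)).getD i 0 < L := by
  by_contra hc
  push_neg at hc
  have : (W.filter (fun x => x < L)).card ≤ i := by
    refine le_trans (Finset.card_le_card ?_) (sortL1 W i hi)
    intro x hx; simp only [Finset.mem_filter] at hx ⊢
    exact ⟨hx.1, lt_of_lt_of_le hx.2 hc⟩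
  omega

private lemma sortD2 (W : Finset ℝ) (i : ℕ) (hi : i < W.card) (L : ℝ)
    (h : (W.filter (fun x => x < L)).card ≤ i) :
    L ≤ (W.sort (· ≤ ·)).getD i 0 := by
  by_contra hc
  push_neg at hc
  have h2 := sortL2 W i hi
  have : (W.filter (fun x => x ≤ (W.sort (· ≤ ·)).getD i 0)).card
      ≤ (W.filter (fun x => x < L)).card := by
    refine Finset.card_le_card ?_
    intro x hx; simp only [Finset.mem_filter] at hx ⊢
    exact ⟨hx.1, lt_of_le_of_lt hx.2 hc⟩
  omega

private lemma sortD3 (W : Finset ℝ) (i : ℕ) (hi : i < W.card) (U : ℝ)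
    (h : i + 1 ≤ (W.filter (fun x => x ≤ U)).card) :
    (W.sort (· ≤ ·)).getD i 0 ≤ U := by
  by_contra hc
  push_neg at hc
  have : (W.filter (fun x => x ≤ U)).card ≤ i := by
    refine le_trans (Finset.card_le_card ?_) (sortL1 W i hi)
    intro x hx; simp only [Finset.mem_filter] at hx ⊢
    exact ⟨hx.1, lt_of_le_of_lt hx.2 hc⟩
  omega

private lemma sort_mem (W : Finset ℝ) (i : ℕ) (hi : i < W.card) :
    (W.sort (· ≤ ·)).getD i 0 ∈ W := by
  have hil : i < (W.sort (· ≤ ·)).length := by rw [Finset.length_sort]; omega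
  rw [show (W.sort (· ≤ ·)).getD i 0 = (W.sort (· ≤ ·)).get ⟨i, hil⟩ from List.getD_eq_get _ _ ⟨i, hil⟩]
  exact (Finset.mem_sort _).1 (List.get_mem _ _)

private lemma aux_ineq1' (L Kt : ℝ) (hL : 1 ≤ L) (hK : 2*L ≤ Kt + 1) :
    (Kt+1)*(2*L+1)^2 ≤ (4*L - 1) * ((Kt+2)^2) := by
  nlinarith [sq_nonneg (Kt+1-2*L), sq_nonneg (L-1),
    mul_nonneg (by linarith : (0:ℝ) ≤ Kt+1-2*L) (by linarith : (0:ℝ) ≤ L - 1),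
    mul_nonneg (by linarith : (0:ℝ) ≤ Kt+1-2*L) (by linarith : (0:ℝ) ≤ Kt+2)]

private lemma aux_ineq2' (L Kt : ℝ) (hL : 1 ≤ L) (hK : 2*L ≤ Kt + 1) :
    (Kt+1)*(8*L^2) ≤ (4*L - 1) * ((Kt+2)^2) := by
  nlinarith [sq_nonneg (Kt+1-2*L), sq_nonneg (L-1),
    mul_nonneg (by linarith : (0:ℝ) ≤ Kt+1-2*L) (by linarith : (0:ℝ) ≤ L - 1),
    mul_nonneg (by linarith : (0:ℝ) ≤ Kt+1-2*L) (by linarith : (0:ℝ) ≤ Kt+2),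
    mul_nonneg (mul_nonneg (by linarith : (0:ℝ) ≤ Kt+1-2*L) (by linarith : (0:ℝ) ≤ Kt+2))
      (by linarith : (0:ℝ) ≤ Kt+2)]

end SortAux

set_option maxHeartbeats 2000000 in
/-- For `k_t = ⌊p_t k⌋` and every candidate `c ∈ C_t ∖ Ŵ_t`, integers `1 ≤ ℓ ≤ k`
and `0 ≤ j ≤ ℓ−1`, the probability `π(ℓ, c, j)` (that a random voter approves `c`, at
most `j` elements of `Ŵ_t` strictly to the left of `c`, and at most `ℓ−1−j` elements
strictly to the right of `c`) is at most `ℓ/k − 1/(4k)`. -/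
theorem riv_pi_bound
    (σ : ℕ) (p : ℕ → ℝ)
    (hp0 : ∀ t ∈ Finset.Icc 1 σ, 0 ≤ p t)
    (hpsum : ∑ t ∈ Finset.Icc 1 σ, p t = 1)
    (t : ℕ) (ht : t ∈ Finset.Icc 1 σ)
    (Ct : Finset ℝ) (hCt : ∀ x ∈ Ct, x ∈ Set.Ioo (t : ℝ) (t + 1))
    (k : ℕ) (hk : 1 ≤ k)
    (kt : ℕ) (hktdef : kt = ⌊p t * (k : ℝ)⌋₊) (hkt : kt ≤ Ct.card)
    (w : ℕ → ℝ) (hw : IsGreedyCommittee t kt Ct w)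
    (W : Finset ℝ) (hW : W = (Finset.Icc 2 (kt + 1)).image w)
    (c : ℝ) (hcCt : c ∈ Ct) (hcW : c ∉ W)
    (ℓ j : ℕ) (hℓ1 : 1 ≤ ℓ) (hℓk : ℓ ≤ k) (hj : j ≤ ℓ - 1) :
    rivMeasure σ p (approvalEvent W c j (ℓ - 1 - j)) ≤
      ENNReal.ofReal ((ℓ : ℝ) / k - 1 / (4 * k)) := by
  classical
  obtain ⟨hct1, hct2⟩ := hCt c hcCt
  set r : ℕ := ℓ - 1 - j with hrdef
  have hjr : j + r + 1 = ℓ := by omega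
  set ρ : ℕ := rank W c with hρdef
  -- ## greedy facts
  have habs : ∀ ξ ∈ Finset.Icc 2 (kt+1),
      |w ξ - markedPoint t kt ξ| ≤ |c - markedPoint t kt ξ| := by
    intro ξ hξ
    obtain ⟨h1, h2, h3⟩ := hw ξ hξ
    refine h3 c hcCt ?_
    intro hc
    apply hcW
    rw [hW]
    refine Finset.image_subset_image (Finset.Icc_subset_Icc le_rfl ?_) hc
    have := (Finset.mem_Icc.1 hξ).2
    omega
  have hwmem : ∀ ξ ∈ Finset.Icc 2 (kt+1), w ξ ∈ W := by
    intro ξ hξ; rw [hW]; exact Finset.mem_image_of_mem w hξ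
  have hwne : ∀ ξ ∈ Finset.Icc 2 (kt+1), w ξ ≠ c := by
    intro ξ hξ he; exact hcW (he ▸ hwmem ξ hξ)
  have hmne : ∀ ξ ∈ Finset.Icc 2 (kt+1), markedPoint t kt ξ ≠ c := by
    intro ξ hξ he
    have h := habs ξ hξ
    rw [he, sub_self, abs_zero, abs_nonpos_iff, sub_eq_zero] at h
    exact hwne ξ hξ h
  have hwlt : ∀ ξ ∈ Finset.Icc 2 (kt+1), markedPoint t kt ξ < c →
      2 * markedPoint t kt ξ - c ≤ w ξ ∧ w ξ < c := by
    intro ξ hξ hm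
    have habs' : |w ξ - markedPoint t kt ξ| ≤ c - markedPoint t kt ξ := by
      have h := habs ξ hξ
      have he : |c - markedPoint t kt ξ| = c - markedPoint t kt ξ :=
        abs_of_pos (by linarith)
      linarith [he ▸ h]
    obtain ⟨h1, h2⟩ := abs_le.1 habs'
    refine ⟨by linarith, ?_⟩
    rcases lt_or_eq_of_le (show w ξ ≤ c by linarith) with h | h
    · exact h
    · exact absurd h (hwne ξ hξ)
  have hwgt : ∀ ξ ∈ Finset.Icc 2 (kt+1), c < markedPoint t kt ξ →
      c < w ξ ∧ w ξ ≤ 2 * markedPoint t kt ξ - c := by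
    intro ξ hξ hm
    have habs' : |w ξ - markedPoint t kt ξ| ≤ markedPoint t kt ξ - c := by
      have h := habs ξ hξ
      have he : |c - markedPoint t kt ξ| = markedPoint t kt ξ - c := by
        rw [abs_of_neg (by linarith : c - markedPoint t kt ξ < 0), neg_sub]
      linarith [he ▸ h]
    obtain ⟨h1, h2⟩ := abs_le.1 habs'
    refine ⟨?_, by linarith⟩
    rcases lt_or_eq_of_le (show c ≤ w ξ by linarith) with h | h
    · exact h
    · exact absurd h.symm (hwne ξ hξ)
  have hmiff : ∀ ξ ∈ Finset.Icc 2 (kt+1), (w ξ < c ↔ markedPoint t kt ξ < c) := by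
    intro ξ hξ
    rcases lt_trichotomy (markedPoint t kt ξ) c with h | h | h
    · simp [h, (hwlt ξ hξ h).2]
    · exact absurd h (hmne ξ hξ)
    · have h2 := (hwgt ξ hξ h).1
      constructor
      · intro h3; linarith
      · intro h3; linarith
  have hinjkey : ∀ a b, a ∈ Finset.Icc 2 (kt+1) → b ∈ Finset.Icc 2 (kt+1) →
      a < b → w a ≠ w b := by
    intro a b ha hb hab he
    obtain ⟨ha1, ha2⟩ := Finset.mem_Icc.1 ha
    have h2 := (hw b hb).2.1
    apply h2
    rw [Finset.mem_image]
    exact ⟨a, Finset.mem_Icc.2 ⟨ha1, by omega⟩, he⟩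
  have hinj : Set.InjOn w ↑(Finset.Icc 2 (kt+1)) := by
    intro a ha b hb hab
    rcases lt_trichotomy a b with h | h | h
    · exact absurd hab (hinjkey a b (Finset.mem_coe.1 ha) (Finset.mem_coe.1 hb) h)
    · exact h
    · exact absurd hab.symm (hinjkey b a (Finset.mem_coe.1 hb) (Finset.mem_coe.1 ha) h)
  have hWcard : W.card = kt := by
    rw [hW, Finset.card_image_of_injOn hinj, Nat.card_Icc]
    omega
  have hmono : ∀ a b : ℕ, a ≤ b → markedPoint t kt a ≤ markedPoint t kt b := by
    intro a b hab
    unfold markedPoint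
    have h1 : (a:ℝ) ≤ b := Nat.cast_le.2 hab
    have h2 : (0:ℝ) < 2 * ((kt:ℝ) + 2) := by positivity
    gcongr
  have hρcard : ρ = ((Finset.Icc 2 (kt+1)).filter
      (fun ξ => markedPoint t kt ξ < c)).card := by
    rw [hρdef, rank, hW, Finset.filter_image]
    rw [Finset.card_image_of_injOn (hinj.mono (by
      intro x hx; exact Finset.mem_coe.2 (Finset.filter_subset _ _ (Finset.mem_coe.1 hx))))]
    congr 1
    apply Finset.filter_congr
    intro ξ hξ
    exact ⟨fun h => (hmiff ξ hξ).1 h, fun h => (hmiff ξ hξ).2 h⟩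
  have hρkt : ρ ≤ kt := by
    rw [hρdef, rank, ← hWcard]
    exact Finset.card_filter_le _ _
  have hSmem : ∀ ξ ∈ Finset.Icc 2 (kt+1), (markedPoint t kt ξ < c ↔ ξ ≤ ρ + 1) := by
    intro ξ hξ
    obtain ⟨hξ2, hξk⟩ := Finset.mem_Icc.1 hξ
    constructor
    · intro hm
      have hsub : Finset.Icc 2 ξ ⊆ (Finset.Icc 2 (kt+1)).filter
          (fun ζ => markedPoint t kt ζ < c) := by
        intro ζ hζ
        obtain ⟨h1, h2⟩ := Finset.mem_Icc.1 hζ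
        exact Finset.mem_filter.2 ⟨Finset.mem_Icc.2 ⟨h1, le_trans h2 hξk⟩,
          lt_of_le_of_lt (hmono ζ ξ h2) hm⟩
      have h := Finset.card_le_card hsub
      rw [Nat.card_Icc, ← hρcard] at h
      omega
    · intro hle
      by_contra hnm
      have hsub : (Finset.Icc 2 (kt+1)).filter (fun ζ => markedPoint t kt ζ < c)
          ⊆ Finset.Icc 2 (ξ-1) := by
        intro ζ hζ
        obtain ⟨hζI, hζm⟩ := Finset.mem_filter.1 hζ
        obtain ⟨g1, g2⟩ := Finset.mem_Icc.1 hζI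
        refine Finset.mem_Icc.2 ⟨g1, ?_⟩
        by_contra hgt
        push_neg at hgt
        exact hnm (lt_of_le_of_lt (hmono ξ ζ (by omega)) hζm)
      have h := Finset.card_le_card hsub
      rw [Nat.card_Icc, ← hρcard] at h
      omega
  -- mark strictly above c for large indices
  have hmgt : ∀ ξ ∈ Finset.Icc 2 (kt+1), ρ + 2 ≤ ξ → c < markedPoint t kt ξ := by
    intro ξ hξ hge
    have h2 : ¬ markedPoint t kt ξ < c := fun hc => by
      have := (hSmem ξ hξ).1 hc; omega
    rcases lt_or_eq_of_le (le_of_not_gt h2) with h3 | h3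
    · exact h3
    · exact absurd h3.symm (hmne ξ hξ)
  have hWsub : ∀ x ∈ W, (t:ℝ) < x ∧ x < (t:ℝ)+1 := by
    intro x hx
    rw [hW] at hx
    obtain ⟨ξ, hξ, rfl⟩ := Finset.mem_image.1 hx
    exact ⟨(hCt _ ((hw ξ hξ).1)).1, (hCt _ ((hw ξ hξ).1)).2⟩
  have hmlt2 : ∀ ξ ∈ Finset.Icc 2 (kt+1), ξ ≤ ρ + 1 → markedPoint t kt ξ < c := by
    intro ξ hξ hle; exact (hSmem ξ hξ).2 hle
  have hrank_eq : (W.filter (fun x => x < c)).card = ρ := hρdef.symm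
  set dm : ℝ := dMinus t W c j with hdmdef
  set dp : ℝ := dPlus t kt W c r with hdpdef
  have hdm_eq1 : ∀ _ : j + 1 ≤ ρ, dm = c - (W.sort (· ≤ ·)).getD (ρ - j - 1) 0 := by
    intro h
    rw [hdmdef]
    simp only [dMinus, ← hρdef]
    rw [if_pos h]
  have hdm_eq2 : ρ ≤ j → dm = c - t := by
    intro h
    rw [hdmdef]
    simp only [dMinus, ← hρdef]
    rw [if_neg (by omega)]
  have hdp_eq1 : ∀ _ : ρ + r < kt, dp = (W.sort (· ≤ ·)).getD (ρ + r) 0 - c := by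
    intro h
    rw [hdpdef]
    simp only [dPlus, ← hρdef]
    rw [if_pos h]
  have hdp_eq2 : kt ≤ ρ + r → dp = (t:ℝ) + 1 - c := by
    intro h
    rw [hdpdef]
    simp only [dPlus, ← hρdef]
    rw [if_neg (by omega)]
  have hsort_lt_c : ∀ i : ℕ, i < ρ → (W.sort (· ≤ ·)).getD i 0 < c := by
    intro i hi
    exact sortD1 W i (by omega) c (by rw [hrank_eq]; omega)
  have hsort_gt_c : ∀ i : ℕ, ρ ≤ i → i < kt → c < (W.sort (· ≤ ·)).getD i 0 := by
    intro i h1 h2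
    have hle : c ≤ (W.sort (· ≤ ·)).getD i 0 := sortD2 W i (by omega) c (by rw [hrank_eq]; omega)
    rcases lt_or_eq_of_le hle with h | h
    · exact h
    · exfalso
      have hm := sort_mem W i (by omega)
      rw [← h] at hm
      exact hcW hm
  have hsort_Ioo : ∀ i : ℕ, i < kt → (t:ℝ) < (W.sort (· ≤ ·)).getD i 0 ∧
      (W.sort (· ≤ ·)).getD i 0 < (t:ℝ) + 1 := by
    intro i hi
    exact hWsub _ (sort_mem W i (by omega))
  have hdm_nonneg : 0 ≤ dm := by
    by_cases h : j + 1 ≤ ρ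
    · rw [hdm_eq1 h]
      have := hsort_lt_c (ρ - j - 1) (by omega)
      linarith
    · rw [hdm_eq2 (by omega)]; linarith
  have hdm_le : dm ≤ c - t := by
    by_cases h : j + 1 ≤ ρ
    · rw [hdm_eq1 h]
      have := (hsort_Ioo (ρ - j - 1) (by omega)).1
      linarith
    · rw [hdm_eq2 (by omega)]
  have hdp_nonneg : 0 ≤ dp := by
    by_cases h : ρ + r < kt
    · rw [hdp_eq1 h]
      have := hsort_gt_c (ρ + r) (by omega) h
      linarith
    · rw [hdp_eq2 (by omega)]; linarith
  have hdp_le : dp ≤ (t:ℝ) + 1 - c := by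
    by_cases h : ρ + r < kt
    · rw [hdp_eq1 h]
      have := (hsort_Ioo (ρ + r) h).2
      linarith
    · rw [hdp_eq2 (by omega)]
  have hB1 : ∀ _ : j + 1 ≤ ρ, dm ≤ 2 * (c - markedPoint t kt (ρ + 1 - j)) := by
    intro h
    have hmemI : ρ + 1 - j ∈ Finset.Icc 2 (kt + 1) := Finset.mem_Icc.2 ⟨by omega, by omega⟩
    have hmlt' : markedPoint t kt (ρ + 1 - j) < c := hmlt2 _ hmemI (by omega)
    set L : ℝ := 2 * markedPoint t kt (ρ + 1 - j) - c with hL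
    have hTsub : (Finset.Icc (ρ + 1 - j) (ρ + 1)).image w ⊆ W.filter (fun x => x < c) := by
      intro x hx
      obtain ⟨ξ, hξ, rfl⟩ := Finset.mem_image.1 hx
      obtain ⟨g1, g2⟩ := Finset.mem_Icc.1 hξ
      have hξI : ξ ∈ Finset.Icc 2 (kt+1) := Finset.mem_Icc.2 ⟨by omega, by omega⟩
      refine Finset.mem_filter.2 ⟨hwmem ξ hξI, ?_⟩
      exact (hwlt ξ hξI (hmlt2 ξ hξI (by omega))).2
    have hTL : ∀ x ∈ (Finset.Icc (ρ + 1 - j) (ρ + 1)).image w, ¬ x < L := by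
      intro x hx
      obtain ⟨ξ, hξ, rfl⟩ := Finset.mem_image.1 hx
      obtain ⟨g1, g2⟩ := Finset.mem_Icc.1 hξ
      have hξI : ξ ∈ Finset.Icc 2 (kt+1) := Finset.mem_Icc.2 ⟨by omega, by omega⟩
      have h1 := (hwlt ξ hξI (hmlt2 ξ hξI (by omega))).1
      have h2 := hmono (ρ + 1 - j) ξ g1
      rw [hL]; push_neg; linarith
    have hTcard : ((Finset.Icc (ρ + 1 - j) (ρ + 1)).image w).card = j + 1 := by
      rw [Finset.card_image_of_injOn (hinj.mono ?_), Nat.card_Icc]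
      · omega
      · intro x hx
        obtain ⟨g1, g2⟩ := Finset.mem_Icc.1 (Finset.mem_coe.1 hx)
        exact Finset.mem_coe.2 (Finset.mem_Icc.2 ⟨by omega, by omega⟩)
    have hfsub : W.filter (fun x => x < L) ⊆
        (W.filter (fun x => x < c)) \ ((Finset.Icc (ρ + 1 - j) (ρ + 1)).image w) := by
      intro x hx
      obtain ⟨hxW, hxL⟩ := Finset.mem_filter.1 hx
      refine Finset.mem_sdiff.2 ⟨Finset.mem_filter.2 ⟨hxW, by rw [hL] at hxL; linarith⟩, ?_⟩
      intro hxT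
      exact hTL x hxT hxL
    have hcount : (W.filter (fun x => x < L)).card ≤ ρ - j - 1 := by
      have h1 := Finset.card_le_card hfsub
      rw [Finset.card_sdiff_of_subset hTsub, hrank_eq, hTcard] at h1
      omega
    have hgeL := sortD2 W (ρ - j - 1) (by omega) L hcount
    rw [hdm_eq1 h]
    rw [hL] at hgeL
    linarith
  have hB3 : ∀ _ : ρ + r < kt, dp ≤ 2 * (markedPoint t kt (ρ + r + 2) - c) := by
    intro h
    have hmemI : ρ + r + 2 ∈ Finset.Icc 2 (kt+1) := Finset.mem_Icc.2 ⟨by omega, by omega⟩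
    have hmgt' : c < markedPoint t kt (ρ + r + 2) := hmgt _ hmemI (by omega)
    set U : ℝ := 2 * markedPoint t kt (ρ + r + 2) - c with hU
    have hsub1 : W.filter (fun x => x < c) ⊆ W.filter (fun x => x ≤ U) := by
      intro x hx
      obtain ⟨h1, h2⟩ := Finset.mem_filter.1 hx
      exact Finset.mem_filter.2 ⟨h1, by rw [hU]; linarith⟩
    have hsub2 : (Finset.Icc (ρ+2) (ρ+r+2)).image w ⊆ W.filter (fun x => x ≤ U) := by
      intro x hx
      obtain ⟨ξ, hξ, rfl⟩ := Finset.mem_image.1 hx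
      obtain ⟨g1, g2⟩ := Finset.mem_Icc.1 hξ
      have hξI : ξ ∈ Finset.Icc 2 (kt+1) := Finset.mem_Icc.2 ⟨by omega, by omega⟩
      have h1 := (hwgt ξ hξI (hmgt ξ hξI (by omega))).2
      have h2 := hmono ξ (ρ+r+2) g2
      exact Finset.mem_filter.2 ⟨hwmem ξ hξI, by rw [hU]; linarith⟩
    have hdisj : Disjoint (W.filter (fun x => x < c)) ((Finset.Icc (ρ+2) (ρ+r+2)).image w) := by
      rw [Finset.disjoint_left]
      intro x hx hx2
      obtain ⟨ξ, hξ, rfl⟩ := Finset.mem_image.1 hx2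
      obtain ⟨g1, g2⟩ := Finset.mem_Icc.1 hξ
      have hξI : ξ ∈ Finset.Icc 2 (kt+1) := Finset.mem_Icc.2 ⟨by omega, by omega⟩
      have h1 := (hwgt ξ hξI (hmgt ξ hξI (by omega))).1
      have h2 := (Finset.mem_filter.1 hx).2
      linarith
    have hT'card : ((Finset.Icc (ρ+2) (ρ+r+2)).image w).card = r + 1 := by
      rw [Finset.card_image_of_injOn (hinj.mono ?_), Nat.card_Icc]
      · omega
      · intro x hx
        obtain ⟨g1, g2⟩ := Finset.mem_Icc.1 (Finset.mem_coe.1 hx)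
        exact Finset.mem_coe.2 (Finset.mem_Icc.2 ⟨by omega, by omega⟩)
    have hcount : ρ + r + 1 ≤ (W.filter (fun x => x ≤ U)).card := by
      have h1 := Finset.card_le_card (Finset.union_subset hsub1 hsub2)
      rw [Finset.card_union_of_disjoint hdisj, hrank_eq, hT'card] at h1
      omega
    have hleU := sortD3 W (ρ + r) (by omega) U hcount
    rw [hdp_eq1 h]
    rw [hU] at hleU
    linarith
  -- ## event geometry
  have hEsub : approvalEvent W c j r ∩ (Set.Icc (t:ℝ) ((t:ℝ)+1) ×ˢ Set.Icc (t:ℝ) ((t:ℝ)+1)) ⊆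
      (Set.Icc (c - dm) c ×ˢ Set.Icc c (c + dp)) ∪
      (Set.Icc c (c + dp) ×ˢ Set.Icc (c - dm) c) := by
    rintro ⟨x, y⟩ ⟨hE, hxy⟩
    simp only [approvalEvent, Set.mem_setOf_eq] at hE
    simp only [Set.mem_prod, Set.mem_Icc] at hxy
    obtain ⟨⟨hminc, hcmax⟩, hcard1, hcard2⟩ := hE
    obtain ⟨⟨hx1, hx2⟩, hy1, hy2⟩ := hxy
    have hta : (t:ℝ) ≤ min x y := le_min hx1 hy1
    have hbt : max x y ≤ (t:ℝ)+1 := max_le hx2 hy2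
    have hamem : c - dm ≤ min x y := by
      by_cases hcase : j + 1 ≤ ρ
      · have hsplit : W.filter (fun z => z < c) ⊆
            (W.filter (fun z => z < min x y)) ∪
            (W.filter (fun z => z < c ∧ min x y ≤ z ∧ z ≤ max x y)) := by
          intro z hz
          obtain ⟨hzW, hzc⟩ := Finset.mem_filter.1 hz
          by_cases hza : z < min x y
          · exact Finset.mem_union_left _ (Finset.mem_filter.2 ⟨hzW, hza⟩)
          · push_neg at hza
            exact Finset.mem_union_right _ (Finset.mem_filter.2 ⟨hzW, hzc, hza,
              le_trans (le_of_lt hzc) hcmax⟩)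
        have h1 := Finset.card_le_card hsplit
        have h2 := Finset.card_union_le (W.filter (fun z => z < min x y))
          (W.filter (fun z => z < c ∧ min x y ≤ z ∧ z ≤ max x y))
        rw [hrank_eq] at h1
        have hkey : ρ - j ≤ (W.filter (fun z => z < min x y)).card := by omega
        have hlt := sortD1 W (ρ - j - 1) (by omega) (min x y) (by omega)
        rw [hdm_eq1 hcase]
        linarith
      · rw [hdm_eq2 (by omega)]
        linarith
    have hbmem : max x y ≤ c + dp := by
      by_cases hcase : ρ + r < kt
      · by_contra hgt
        push_neg at hgt
        rw [hdp_eq1 hcase] at hgt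
        have hVb : (W.sort (· ≤ ·)).getD (ρ + r) 0 < max x y := by linarith
        have h2 := sortL2 W (ρ + r) (by omega)
        have hsub2 : (W.filter (fun z => z ≤ (W.sort (· ≤ ·)).getD (ρ + r) 0)) \
            (W.filter (fun z => z < c)) ⊆
            W.filter (fun z => c < z ∧ min x y ≤ z ∧ z ≤ max x y) := by
          intro z hz
          obtain ⟨hz1, hz2⟩ := Finset.mem_sdiff.1 hz
          obtain ⟨hzW, hzV⟩ := Finset.mem_filter.1 hz1
          have hzc : ¬ z < c := fun hc => hz2 (Finset.mem_filter.2 ⟨hzW, hc⟩)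
          push_neg at hzc
          have hzc' : c < z := lt_of_le_of_ne hzc (fun he => hcW (by rw [he]; exact hzW))
          exact Finset.mem_filter.2 ⟨hzW, hzc', le_trans hminc (le_of_lt hzc'),
            le_trans hzV (le_of_lt hVb)⟩
        have h3 := Finset.card_le_card hsub2
        have h4 := Finset.le_card_sdiff (W.filter (fun z => z < c))
          (W.filter (fun z => z ≤ (W.sort (· ≤ ·)).getD (ρ + r) 0))
        rw [hrank_eq] at h4
        omega
      · rw [hdp_eq2 (by omega)]
        linarith
    rcases le_total x y with hle | hle
    · have h1 : min x y = x := min_eq_left hle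
      have h2 : max x y = y := max_eq_right hle
      rw [h1] at hamem hminc
      rw [h2] at hbmem hcmax
      exact Or.inl ⟨⟨hamem, hminc⟩, hcmax, hbmem⟩
    · have h1 : min x y = y := min_eq_right hle
      have h2 : max x y = x := max_eq_left hle
      rw [h1] at hamem hminc
      rw [h2] at hbmem hcmax
      exact Or.inr ⟨⟨hcmax, hbmem⟩, hamem, hminc⟩
  -- ## measure computation
  have hsegzero : ∀ t' ∈ Finset.Icc 1 σ, t' ≠ t →
      (ENNReal.ofReal (p t') • ((volume.restrict (Set.Icc (t':ℝ) ((t':ℝ)+1))).prod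
        (volume.restrict (Set.Icc (t':ℝ) ((t':ℝ)+1))))) (approvalEvent W c j r) = 0 := by
    intro t' ht' hne
    rw [Measure.smul_apply, Measure.prod_restrict,
      Measure.restrict_apply' (measurableSet_Icc.prod measurableSet_Icc)]
    have hempty : approvalEvent W c j r ∩
        (Set.Icc (t':ℝ) ((t':ℝ)+1) ×ˢ Set.Icc (t':ℝ) ((t':ℝ)+1)) = ∅ := by
      rw [Set.eq_empty_iff_forall_notMem]
      rintro ⟨x, y⟩ ⟨hE, hxy⟩
      simp only [approvalEvent, Set.mem_setOf_eq] at hE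
      simp only [Set.mem_prod, Set.mem_Icc] at hxy
      obtain ⟨⟨hminc, hcmax⟩, -, -⟩ := hE
      obtain ⟨⟨hx1, hx2⟩, hy1, hy2⟩ := hxy
      rcases lt_or_gt_of_ne hne with hlt | hgt
      · have hc1 : ((t':ℝ) + 1) ≤ t := by
          have h : (t' + 1 : ℕ) ≤ t := hlt
          exact_mod_cast h
        have h2 : max x y ≤ (t':ℝ) + 1 := max_le hx2 hy2
        linarith
      · have hc1 : ((t:ℝ) + 1) ≤ t' := by
          have h : (t + 1 : ℕ) ≤ t' := hgt
          exact_mod_cast h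
        have h2 : (t':ℝ) ≤ min x y := le_min hx1 hy1
        linarith
    rw [hempty, measure_empty, smul_eq_mul, mul_zero]
  have hmeas : rivMeasure σ p (approvalEvent W c j r) ≤
      ENNReal.ofReal (p t) * (ENNReal.ofReal (dm * dp) + ENNReal.ofReal (dp * dm)) := by
    rw [rivMeasure, Measure.finset_sum_apply]
    rw [Finset.sum_eq_single_of_mem t ht (fun b hb hbne => hsegzero b hb hbne)]
    rw [Measure.smul_apply, Measure.prod_restrict,
      Measure.restrict_apply' (measurableSet_Icc.prod measurableSet_Icc)]
    rw [smul_eq_mul]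
    refine mul_le_mul_right ?_ _
    refine le_trans (measure_mono hEsub) ?_
    refine le_trans (measure_union_le _ _) ?_
    rw [Measure.prod_prod, Measure.prod_prod, Real.volume_Icc, Real.volume_Icc]
    have e1 : c - (c - dm) = dm := by ring
    have e2 : c + dp - c = dp := by ring
    rw [e1, e2, ← ENNReal.ofReal_mul hdm_nonneg, ← ENNReal.ofReal_mul hdp_nonneg]
  have hcomb : rivMeasure σ p (approvalEvent W c j r) ≤
      ENNReal.ofReal (p t * (2 * (dm * dp))) := by
    refine le_trans hmeas ?_
    rw [← ENNReal.ofReal_add (mul_nonneg hdm_nonneg hdp_nonneg)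
      (mul_nonneg hdp_nonneg hdm_nonneg), ← ENNReal.ofReal_mul (hp0 t ht)]
    exact ENNReal.ofReal_le_ofReal (le_of_eq (by ring))
  refine le_trans hcomb (ENNReal.ofReal_le_ofReal ?_)
  -- ## the real inequality
  have hkpos : (0:ℝ) < k := by exact_mod_cast hk
  have hppos : 0 ≤ p t := hp0 t ht
  have hptk : p t * k < (kt:ℝ) + 1 := by
    have h := Nat.lt_floor_add_one (p t * k)
    rw [← hktdef] at h
    exact_mod_cast h
  have hdmdp0 : 0 ≤ dm * dp := mul_nonneg hdm_nonneg hdp_nonneg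
  rw [show (ℓ:ℝ)/k - 1/(4*k) = (4*ℓ-1)/(4*k) by field_simp]
  rw [le_div_iff₀ (by positivity)]
  set L : ℝ := (ℓ:ℝ) with hLdef
  have hL1 : (1:ℝ) ≤ L := by rw [hLdef]; exact_mod_cast hℓ1
  by_cases hcaseA : kt + 2 ≤ 2*ℓ
  · -- trivial case
    have h1 : dm * dp ≤ (c - t) * (((t:ℝ)+1) - c) :=
      mul_le_mul hdm_le hdp_le hdp_nonneg (by linarith)
    have h2 : (c - t) * (((t:ℝ)+1) - c) ≤ 1/4 := by nlinarith [sq_nonneg (2*(c - t) - 1)]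
    have hklt : (kt:ℝ) + 2 ≤ 2*L := by
      have h := (Nat.cast_le (α := ℝ)).2 hcaseA
      push_cast at h
      linarith
    have hc3 : p t * (2*(dm*dp)) * (4*(k:ℝ)) = (p t * k) * (8*(dm*dp)) := by ring
    rw [hc3]
    have h8 : (0:ℝ) ≤ 8*(dm*dp) := by linarith
    have hc4 : (p t * k) * (8*(dm*dp)) ≤ ((kt:ℝ)+1) * (8*(dm*dp)) :=
      mul_le_mul_of_nonneg_right hptk.le h8
    have hc5 : ((kt:ℝ)+1) * (8*(dm*dp)) ≤ ((kt:ℝ)+1) * 2 :=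
      mul_le_mul_of_nonneg_left (by linarith) (by positivity)
    linarith
  · -- main case
    have hBcase : 2*ℓ ≤ kt + 1 := by omega
    have hKL : 2*L ≤ (kt:ℝ) + 1 := by
      have h := (Nat.cast_le (α := ℝ)).2 hBcase
      push_cast at h
      linarith
    set Kr : ℝ := (kt:ℝ) + 2 with hKrdef
    have hKr0 : (0:ℝ) < Kr := by positivity
    have hm_val : ∀ ξ : ℕ, (markedPoint t kt ξ - t) * (2*Kr) = 2*(ξ:ℝ) - 1 := by
      intro ξ
      rw [hKrdef]
      unfold markedPoint
      field_simp
      ring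
    have h8 : (0:ℝ) ≤ 8*(dm*dp) := by linarith
    have hconc1 : 8*(dm*dp)*Kr^2 ≤ (2*L+1)^2 →
        p t * (2*(dm*dp)) * (4*(k:ℝ)) ≤ 4*L - 1 := by
      intro hprod
      have hkr2 : (0:ℝ) < Kr^2 := by positivity
      have haux := aux_ineq1' L (kt:ℝ) hL1 hKL
      have hc1 : ((kt:ℝ)+1) * (8*(dm*dp)) * Kr^2 ≤ (4*L-1) * Kr^2 := by
        calc ((kt:ℝ)+1) * (8*(dm*dp)) * Kr^2 = ((kt:ℝ)+1) * (8*(dm*dp)*Kr^2) := by ring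
          _ ≤ ((kt:ℝ)+1) * (2*L+1)^2 := mul_le_mul_of_nonneg_left hprod (by positivity)
          _ ≤ (4*L-1) * Kr^2 := by rw [hKrdef]; exact haux
      have hc2 : ((kt:ℝ)+1) * (8*(dm*dp)) ≤ 4*L-1 := le_of_mul_le_mul_right hc1 hkr2
      have hc3 : p t * (2*(dm*dp)) * (4*(k:ℝ)) = (p t * k) * (8*(dm*dp)) := by ring
      rw [hc3]
      have hc4 : (p t * k) * (8*(dm*dp)) ≤ ((kt:ℝ)+1) * (8*(dm*dp)) :=
        mul_le_mul_of_nonneg_right hptk.le h8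
      linarith
    have hconc2 : 8*(dm*dp)*Kr^2 ≤ 8*L^2 →
        p t * (2*(dm*dp)) * (4*(k:ℝ)) ≤ 4*L - 1 := by
      intro hprod
      have hkr2 : (0:ℝ) < Kr^2 := by positivity
      have haux := aux_ineq2' L (kt:ℝ) hL1 hKL
      have hc1 : ((kt:ℝ)+1) * (8*(dm*dp)) * Kr^2 ≤ (4*L-1) * Kr^2 := by
        calc ((kt:ℝ)+1) * (8*(dm*dp)) * Kr^2 = ((kt:ℝ)+1) * (8*(dm*dp)*Kr^2) := by ring
          _ ≤ ((kt:ℝ)+1) * (8*L^2) := mul_le_mul_of_nonneg_left hprod (by positivity)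
          _ ≤ (4*L-1) * Kr^2 := by rw [hKrdef]; exact haux
      have hc2 : ((kt:ℝ)+1) * (8*(dm*dp)) ≤ 4*L-1 := le_of_mul_le_mul_right hc1 hkr2
      have hc3 : p t * (2*(dm*dp)) * (4*(k:ℝ)) = (p t * k) * (8*(dm*dp)) := by ring
      rw [hc3]
      have hc4 : (p t * k) * (8*(dm*dp)) ≤ ((kt:ℝ)+1) * (8*(dm*dp)) :=
        mul_le_mul_of_nonneg_right hptk.le h8
      linarith
    have hjrc : (j:ℝ) + (r:ℝ) + 1 = L := by
      have h := congrArg (Nat.cast : ℕ → ℝ) hjr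
      push_cast at h
      rw [hLdef]
      linarith
    by_cases hρj : j + 1 ≤ ρ
    · by_cases hrk : ρ + r < kt
      · -- sub-case ii : interior
        have hmemI1 : ρ + 1 - j ∈ Finset.Icc 2 (kt+1) := Finset.mem_Icc.2 ⟨by omega, by omega⟩
        have hmemI2 : ρ + r + 2 ∈ Finset.Icc 2 (kt+1) := Finset.mem_Icc.2 ⟨by omega, by omega⟩
        have hXlt : markedPoint t kt (ρ+1-j) < c := hmlt2 _ hmemI1 (by omega)
        have hBgt : c < markedPoint t kt (ρ+r+2) := hmgt _ hmemI2 (by omega)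
        set X : ℝ := c - markedPoint t kt (ρ+1-j) with hX
        set Y : ℝ := markedPoint t kt (ρ+r+2) - c with hY
        have hdmX : dm ≤ 2*X := by have h := hB1 hρj; rw [hX]; linarith
        have hdpY : dp ≤ 2*Y := by have h := hB3 hrk; rw [hY]; linarith
        have hX0 : 0 ≤ X := by rw [hX]; linarith
        have hY0 : 0 ≤ Y := by rw [hY]; linarith
        have hcast : ((ρ+1-j:ℕ):ℝ) = (ρ:ℝ) + 1 - (j:ℝ) := by
          have h : ((ρ+1-j:ℕ):ℝ) = ((ρ+1:ℕ):ℝ) - (j:ℝ) := by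
            rw [Nat.cast_sub (by omega)]
          rw [h]; push_cast; ring
        have hsum : (X + Y) * (2*Kr) = 2*L := by
          have he : (X + Y) * (2*Kr) = (markedPoint t kt (ρ+r+2) - t) * (2*Kr)
              - (markedPoint t kt (ρ+1-j) - t) * (2*Kr) := by rw [hX, hY]; ring
          rw [he, hm_val (ρ+r+2), hm_val (ρ+1-j), hcast]
          push_cast
          linarith
        have hdd : dm * dp ≤ (2*X)*(2*Y) := mul_le_mul hdmX hdpY hdp_nonneg (by linarith)
        have hprod : 8*(dm*dp)*Kr^2 ≤ 8*L^2 := by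
          have hsq : ((X+Y)*(2*Kr))^2 = (2*L)^2 := by rw [hsum]
          nlinarith [sq_nonneg ((X-Y)*(2*Kr)),
            mul_le_mul_of_nonneg_right hdd (sq_nonneg Kr)]
        exact hconc2 hprod
      · -- sub-case iii : right edge
        have hrk' : kt ≤ ρ + r := by omega
        have hmemI1 : ρ + 1 - j ∈ Finset.Icc 2 (kt+1) := Finset.mem_Icc.2 ⟨by omega, by omega⟩
        have hXlt : markedPoint t kt (ρ+1-j) < c := hmlt2 _ hmemI1 (by omega)
        set X : ℝ := c - markedPoint t kt (ρ+1-j) with hX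
        set Y : ℝ := (t:ℝ) + 1 - c with hY
        have hdmX : dm ≤ 2*X := by have h := hB1 hρj; rw [hX]; linarith
        have hdpY : dp = Y := by rw [hY]; exact hdp_eq2 hrk'
        have hX0 : 0 ≤ X := by rw [hX]; linarith
        have hY0 : 0 ≤ Y := by rw [hY]; linarith
        have hcast : ((ρ+1-j:ℕ):ℝ) = (ρ:ℝ) + 1 - (j:ℝ) := by
          have h : ((ρ+1-j:ℕ):ℝ) = ((ρ+1:ℕ):ℝ) - (j:ℝ) := by
            rw [Nat.cast_sub (by omega)]
          rw [h]; push_cast; ring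
        have hktle : (kt:ℝ) ≤ (ρ:ℝ) + (r:ℝ) := by
          have h := (Nat.cast_le (α := ℝ)).2 hrk'
          push_cast at h
          linarith
        have hsumle : (X + Y) * (2*Kr) ≤ 2*L + 1 := by
          have hexp : (X + Y) * (2*Kr) = 2*Kr - (markedPoint t kt (ρ+1-j) - t) * (2*Kr) := by
            rw [hX, hY]; ring
          rw [hexp, hm_val (ρ+1-j), hcast, hKrdef]
          linarith
        have hdd : dm * dp ≤ (2*X)*Y := by
          rw [hdpY]
          exact mul_le_mul_of_nonneg_right hdmX hY0
        have hprod : 8*(dm*dp)*Kr^2 ≤ (2*L+1)^2 := by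
          have h0 : 0 ≤ (X+Y)*(2*Kr) := mul_nonneg (by linarith) (by linarith)
          have hsq : ((X+Y)*(2*Kr))^2 ≤ (2*L+1)^2 := by nlinarith
          nlinarith [sq_nonneg ((X-Y)*(2*Kr)),
            mul_le_mul_of_nonneg_right hdd (sq_nonneg Kr)]
        exact hconc1 hprod
    · -- sub-case i : left edge
      have hρj' : ρ ≤ j := by omega
      have hrk : ρ + r < kt := by omega
      have hmemI : ρ + r + 2 ∈ Finset.Icc 2 (kt+1) := Finset.mem_Icc.2 ⟨by omega, by omega⟩
      have hBgt : c < markedPoint t kt (ρ+r+2) := hmgt _ hmemI (by omega)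
      set A : ℝ := c - t with hA
      set B : ℝ := markedPoint t kt (ρ+r+2) - c with hB
      have hdmA : dm = A := by rw [hA]; exact hdm_eq2 hρj'
      have hdpB : dp ≤ 2*B := by have h := hB3 hrk; rw [hB]; linarith
      have hA0 : 0 ≤ A := by rw [hA]; linarith
      have hB0 : 0 ≤ B := by rw [hB]; linarith
      have hsum : (A + B) * (2*Kr) = 2*((ρ:ℝ)+(r:ℝ)) + 3 := by
        have he : (A + B) * (2*Kr) = (markedPoint t kt (ρ+r+2) - t) * (2*Kr) := by
          rw [hA, hB]; ring
        rw [he, hm_val (ρ+r+2)]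
        push_cast
        ring
      have hρrle : (ρ:ℝ) + (r:ℝ) ≤ L - 1 := by
        have hn : ρ + r + 1 ≤ ℓ := by omega
        have h := (Nat.cast_le (α := ℝ)).2 hn
        push_cast at h
        rw [hLdef]
        linarith
      have hdd : dm * dp ≤ A*(2*B) := by
        rw [hdmA]
        exact mul_le_mul_of_nonneg_left hdpB hA0
      have hprod : 8*(dm*dp)*Kr^2 ≤ (2*L+1)^2 := by
        have hsq : ((A+B)*(2*Kr))^2 = (2*((ρ:ℝ)+(r:ℝ)) + 3)^2 := by rw [hsum]
        have hub : (2*((ρ:ℝ)+(r:ℝ)) + 3)^2 ≤ (2*L+1)^2 := by nlinarith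
        nlinarith [sq_nonneg ((A-B)*(2*Kr)),
          mul_le_mul_of_nonneg_right hdd (sq_nonneg Kr)]
      exact hconc1 hprod
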